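/- Let V be a finite-dimensional normed vector space, A₀ ∈ End(V), and let A : (-∞,0] → End(V) be continuous. Let E solve the initial value problem E'(t) = A(t)·E(t), E(0) = id, on (-∞,0]. Fix ε > 0 and let ℓ = ℓ(A₀), M = M(A₀,ε) := sup_{t≤0}‖exp(t(A₀-ℓ+ε))‖. Then for all t ≤ 0, ‖E(t)‖ ≤ M · exp( t·( ℓ - ε - M · sup_{s≤0} ‖A(s) - A₀‖ ) ). -/

import Mathlib

open NormedSpace Set

/-- Perturbation estimate: if `E' = A(t)E`, `E(0) = id` on `(-∞,0]`, `ℓ = ℓ(A₀)` is the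
minimal real part of the spectrum of `A₀`, `M = sup_{t≤0} ‖exp(t(A₀-ℓ+ε))‖` and
`K = sup_{s≤0} ‖A(s)-A₀‖`, then `‖E(t)‖ ≤ M·exp(t(ℓ - ε - M·K))` for all `t ≤ 0`. -/
theorem stmt2 {V : Type*} [NormedAddCommGroup V] [NormedSpace ℂ V]
    [FiniteDimensional ℂ V] (A₀ : V →L[ℂ] V)
    (A : ℝ → (V →L[ℂ] V)) (hA : ContinuousOn A (Set.Iic 0))
    (E : ℝ → (V →L[ℂ] V)) (hE0 : E 0 = 1)
    (hE : ∀ t ≤ (0:ℝ), HasDerivAt E (A t * E t) t)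
    (ℓ : ℝ) (hℓ : ℓ = sInf (Complex.re '' spectrum ℂ A₀))
    (ε : ℝ) (hε : 0 < ε)
    (M : ℝ)
    (hMbdd : BddAbove ((fun t : ℝ =>
      ‖NormedSpace.exp (t • (A₀ - (ℓ : ℂ) • (1 : V →L[ℂ] V) + (ε : ℂ) • (1 : V →L[ℂ] V)))‖)
        '' Set.Iic 0))
    (hM : M = sSup ((fun t : ℝ =>
      ‖NormedSpace.exp (t • (A₀ - (ℓ : ℂ) • (1 : V →L[ℂ] V) + (ε : ℂ) • (1 : V →L[ℂ] V)))‖)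
        '' Set.Iic 0))
    (K : ℝ)
    (hKbdd : BddAbove ((fun s : ℝ => ‖A s - A₀‖) '' Set.Iic 0))
    (hK : K = sSup ((fun s : ℝ => ‖A s - A₀‖) '' Set.Iic 0)) :
    ∀ t ≤ (0:ℝ), ‖E t‖ ≤ M * Real.exp (t * (ℓ - ε - M * K)) := by
  have hV : CompleteSpace V := FiniteDimensional.complete ℂ V
  let +nondep : NormedAlgebra ℚ (V →L[ℂ] V) := .restrictScalars ℚ ℂ (V →L[ℂ] V)
  set C : V →L[ℂ] V := A₀ - (ℓ : ℂ) • (1 : V →L[ℂ] V) + (ε : ℂ) • (1 : V →L[ℂ] V) with hC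
  set r : ℝ := ℓ - ε with hr
  have hMle : ∀ τ ≤ (0:ℝ), ‖exp (τ • C)‖ ≤ M := fun τ hτ =>
    hM ▸ le_csSup hMbdd ⟨τ, hτ, rfl⟩
  have hM0 : 0 ≤ M := le_trans (norm_nonneg _) (hMle 0 le_rfl)
  have hKle : ∀ s ≤ (0:ℝ), ‖A s - A₀‖ ≤ K := fun s hs =>
    hK ▸ le_csSup hKbdd ⟨s, hs, rfl⟩
  have hK0 : 0 ≤ K := le_trans (norm_nonneg _) (hKle 0 le_rfl)
  -- bound on exp(τ • A₀)
  have hexpA : ∀ τ ≤ (0:ℝ), ‖exp (τ • A₀)‖ ≤ M * Real.exp (τ * r) := by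
    intro τ hτ
    have hsum : τ • A₀ = τ • C + (((τ * r : ℝ) : ℂ)) • (1 : V →L[ℂ] V) := by
      simp only [hC, hr, ← Complex.coe_smul]
      push_cast
      module
    have hcomm : Commute (τ • C) ((((τ * r : ℝ) : ℂ)) • (1 : V →L[ℂ] V)) :=
      (Commute.one_right _).smul_right _
    rw [hsum, NormedSpace.exp_add_of_commute hcomm,
      ← Algebra.algebraMap_eq_smul_one (R := ℂ), ← NormedSpace.algebraMap_exp_comm,
      Algebra.algebraMap_eq_smul_one, mul_smul_comm, mul_one, norm_smul,
      ← Complex.exp_eq_exp_ℂ, Complex.norm_exp, Complex.ofReal_re, mul_comm]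
    exact mul_le_mul_of_nonneg_right (hMle τ hτ) (Real.exp_nonneg _)
  -- continuity of E
  have hEcont : ContinuousOn E (Iic 0) := fun s hs =>
    (hE s hs).continuousAt.continuousWithinAt
  set Ec : ℝ → (V →L[ℂ] V) := fun s => E (min s 0) with hEcdef
  have hEcC : Continuous Ec :=
    hEcont.comp_continuous (continuous_id.min continuous_const)
      (fun s => Set.mem_Iic.2 (min_le_right s 0))
  have hEceq : ∀ s ≤ (0:ℝ), Ec s = E s := by
    intro s hs; simp only [hEcdef, min_eq_left hs]
  -- Duhamel estimate
  have key : ∀ t ≤ (0:ℝ), ‖E t‖ ≤ M * Real.exp (t * r)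
      + (M * K * Real.exp (t * r)) * ∫ s in t..(0:ℝ), Real.exp (-(s * r)) * ‖E s‖ := by
    intro t ht
    set F : ℝ → (V →L[ℂ] V) := fun s => exp ((t - s) • A₀) with hF
    have hFc : Continuous F := by
      apply NormedSpace.exp_continuous.comp
      exact (continuous_const.sub continuous_id).smul continuous_const
    have hFd : ∀ s : ℝ, HasDerivAt F (-(A₀ * F s)) s := by
      intro s
      have h1 : HasDerivAt (fun c : ℂ => exp (c • A₀))
          (A₀ * exp ((((t - s : ℝ)) : ℂ) • A₀)) (((t - s : ℝ)) : ℂ) :=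
        hasDerivAt_exp_smul_const' A₀ _
      have h2 : HasDerivAt (fun s' : ℝ => (((t - s' : ℝ)) : ℂ)) (-1 : ℂ) s := by
        simpa [Complex.ofReal_sub] using
          (Complex.ofRealCLM.hasDerivAt (x := s)).const_sub (t : ℂ)
      have h3 : HasDerivAt (fun s' : ℝ => exp ((((t - s' : ℝ)) : ℂ) • A₀))
          (-(A₀ * exp ((((t - s : ℝ)) : ℂ) • A₀))) s := by
        simpa [Function.comp_def, neg_smul, one_smul] using h1.scomp s h2
      simp only [Complex.coe_smul] at h3
      exact h3
    have hgd : ∀ s ∈ Icc t (0:ℝ),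
        HasDerivAt (fun s' => F s' * E s') (F s * ((A s - A₀) * E s)) s := by
      intro s hs
      have h := (hFd s).mul (hE s hs.2)
      have hcomm : A₀ * F s = F s * A₀ := by
        have hc : Commute ((t - s) • A₀) A₀ := (Commute.refl A₀).smul_left _
        exact (hc.exp_left.symm)
      refine h.congr_deriv (Eq.symm ?_)
      calc F s * ((A s - A₀) * E s)
          = F s * (A s * E s) - (F s * A₀) * E s := by noncomm_ring
        _ = -(A₀ * F s) * E s + F s * (A s * E s) := by rw [← hcomm]; noncomm_ring
    have hcint : ContinuousOn (fun s => F s * ((A s - A₀) * E s)) (Icc t 0) :=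
      hFc.continuousOn.mul
        (((hA.sub continuousOn_const).mul hEcont).mono Icc_subset_Iic_self)
    have hint : IntervalIntegrable (fun s => F s * ((A s - A₀) * E s))
        MeasureTheory.volume t 0 := by
      apply ContinuousOn.intervalIntegrable
      rwa [uIcc_of_le ht]
    have hFTC : (∫ s in t..(0:ℝ), F s * ((A s - A₀) * E s)) = F 0 * E 0 - F t * E t := by
      refine intervalIntegral.integral_eq_sub_of_hasDerivAt
        (f := fun s' => F s' * E s') ?_ hint
      intro s hs
      rw [uIcc_of_le ht] at hs
      exact hgd s hs
    have hFt : F t * E t = E t := by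
      rw [hF]; simp [sub_self, zero_smul, NormedSpace.exp_zero]
    have hF0 : F 0 * E 0 = exp (t • A₀) := by
      rw [hF, hE0]; simp
    have hEt : E t = exp (t • A₀) - ∫ s in t..(0:ℝ), F s * ((A s - A₀) * E s) := by
      rw [hFTC, hF0, hFt]; abel
    have h6 : ‖E t‖ ≤ M * Real.exp (t * r)
        + ∫ s in t..(0:ℝ), M * Real.exp ((t - s) * r) * (K * ‖E s‖) := by
      rw [hEt]
      refine le_trans (norm_sub_le _ _) (add_le_add (hexpA t ht) ?_)
      refine le_trans (intervalIntegral.norm_integral_le_integral_norm ht) ?_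
      apply intervalIntegral.integral_mono_on ht
      · apply ContinuousOn.intervalIntegrable
        rw [uIcc_of_le ht]; exact hcint.norm
      · apply ContinuousOn.intervalIntegrable
        rw [uIcc_of_le ht]
        apply ContinuousOn.mul
        · exact (continuous_const.mul ((Real.continuous_exp.comp
            ((continuous_const.sub continuous_id).mul continuous_const)))).continuousOn
        · exact continuousOn_const.mul ((hEcont.mono Icc_subset_Iic_self).norm)
      · intro s hs
        have n1 : ‖F s‖ ≤ M * Real.exp ((t - s) * r) := hexpA _ (by linarith [hs.1])
        have n2 : ‖(A s - A₀) * E s‖ ≤ K * ‖E s‖ :=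
          le_trans (norm_mul_le _ _)
            (mul_le_mul_of_nonneg_right (hKle s hs.2) (norm_nonneg _))
        calc ‖F s * ((A s - A₀) * E s)‖
            ≤ ‖F s‖ * ‖(A s - A₀) * E s‖ := norm_mul_le _ _
          _ ≤ (M * Real.exp ((t - s) * r)) * (K * ‖E s‖) :=
              mul_le_mul n1 n2 (norm_nonneg _)
                (mul_nonneg hM0 (Real.exp_nonneg _))
    have h7 : (∫ s in t..(0:ℝ), M * Real.exp ((t - s) * r) * (K * ‖E s‖))
        = (M * K * Real.exp (t * r)) * ∫ s in t..(0:ℝ), Real.exp (-(s * r)) * ‖E s‖ := by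
      rw [← intervalIntegral.integral_const_mul]
      apply intervalIntegral.integral_congr
      intro s _
      simp only
      rw [show (t - s) * r = t * r + -(s * r) by ring, Real.exp_add]
      ring
    rw [h7] at h6
    exact h6
  -- reverse time, integral inequality for u
  set u : ℝ → ℝ := fun τ => Real.exp (τ * r) * ‖Ec (-τ)‖ with hudef
  have huc : Continuous u :=
    (Real.continuous_exp.comp (continuous_id.mul continuous_const)).mul
      ((hEcC.comp continuous_neg).norm)
  have hunn : ∀ τ, 0 ≤ u τ := fun τ => mul_nonneg (Real.exp_nonneg _) (norm_nonneg _)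
  have hui : ∀ τ, 0 ≤ τ → u τ ≤ M + (M * K) * ∫ σ in (0:ℝ)..τ, u σ := by
    intro τ hτ
    have hmt : -τ ≤ (0:ℝ) := by linarith
    have h1 := key (-τ) hmt
    have h2 : (∫ s in (-τ)..(0:ℝ), Real.exp (-(s * r)) * ‖E s‖)
        = ∫ σ in (0:ℝ)..τ, u σ := by
      have hcn := intervalIntegral.integral_comp_neg (a := (0:ℝ)) (b := τ)
        (f := fun s => Real.exp (-(s * r)) * ‖E s‖)
      rw [neg_zero] at hcn
      rw [← hcn]
      apply intervalIntegral.integral_congr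
      intro x hx
      rw [uIcc_of_le hτ] at hx
      simp only [hudef]
      rw [hEceq _ (by linarith [hx.1] : -x ≤ (0:ℝ))]
      rw [show -(-x * r) = x * r by ring]
    rw [h2] at h1
    have e1 : Real.exp (τ * r) * Real.exp (-τ * r) = 1 := by
      rw [← Real.exp_add, show τ * r + -τ * r = 0 by ring, Real.exp_zero]
    calc u τ = Real.exp (τ * r) * ‖E (-τ)‖ := by
          simp only [hudef]; rw [hEceq _ hmt]
      _ ≤ Real.exp (τ * r) * (M * Real.exp (-τ * r)
            + (M * K * Real.exp (-τ * r)) * ∫ σ in (0:ℝ)..τ, u σ) :=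
          mul_le_mul_of_nonneg_left h1 (Real.exp_nonneg _)
      _ = M * (Real.exp (τ * r) * Real.exp (-τ * r))
            + (M * K) * (∫ σ in (0:ℝ)..τ, u σ) * (Real.exp (τ * r) * Real.exp (-τ * r)) := by
          ring
      _ = M + (M * K) * ∫ σ in (0:ℝ)..τ, u σ := by rw [e1]; ring
  -- Gronwall
  intro t ht
  set T : ℝ := -t with hT
  have hT0 : (0:ℝ) ≤ T := by rw [hT]; linarith
  set w : ℝ → ℝ := fun τ => ∫ σ in (0:ℝ)..τ, u σ with hwdef
  have hwd : ∀ x : ℝ, HasDerivAt w (u x) x := fun x =>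
    (huc.integral_hasStrictDerivAt 0 x).hasDerivAt
  have hwnn : ∀ x, 0 ≤ x → 0 ≤ w x := fun x hx =>
    intervalIntegral.integral_nonneg hx (fun σ _ => hunn σ)
  have hgr := norm_le_gronwallBound_of_norm_deriv_right_le
    (f := w) (f' := u) (δ := 0) (K := M * K) (ε := M) (a := 0) (b := T)
    (fun x _ => (hwd x).continuousAt.continuousWithinAt)
    (fun x _ => (hwd x).hasDerivWithinAt)
    (by simp [hwdef])
    (by
      intro x hx
      rw [Real.norm_of_nonneg (hunn x), Real.norm_of_nonneg (hwnn x hx.1)]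
      have := hui x hx.1
      linarith)
  have hwT : w T ≤ gronwallBound 0 (M * K) M (T - 0) :=
    le_trans (le_abs_self _) (hgr T ⟨hT0, le_refl T⟩)
  have hgb : M + (M * K) * gronwallBound 0 (M * K) M (T - 0)
      ≤ M * Real.exp ((M * K) * T) := by
    rw [sub_zero]
    by_cases h : (M * K) = 0
    · rw [h]; simp [Real.exp_nonneg]
    · simp only [gronwallBound_of_K_ne_0 h, zero_mul, zero_add]
      have h9 : M * K * (M / (M * K) * (Real.exp (M * K * T) - 1))
          = M * (Real.exp (M * K * T) - 1) := by
        have hK' : K ≠ 0 := right_ne_zero_of_mul h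
        field_simp
      rw [h9]
      linarith [show M + M * (Real.exp (M * K * T) - 1)
        = M * Real.exp (M * K * T) from by ring]
  have huT : u T ≤ M * Real.exp ((M * K) * T) := by
    have h1 := hui T hT0
    have h2 : (M * K) * w T ≤ (M * K) * gronwallBound 0 (M * K) M (T - 0) :=
      mul_le_mul_of_nonneg_left hwT (mul_nonneg hM0 hK0)
    calc u T ≤ M + (M * K) * w T := h1
      _ ≤ M + (M * K) * gronwallBound 0 (M * K) M (T - 0) := by linarith
      _ ≤ M * Real.exp ((M * K) * T) := hgb
  have hET : Real.exp (t * r) * u T = ‖E t‖ := by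
    simp only [hudef, hT, neg_neg]
    rw [hEceq t ht, ← mul_assoc, ← Real.exp_add, show t * r + -t * r = 0 by ring,
      Real.exp_zero, one_mul]
  calc ‖E t‖ = Real.exp (t * r) * u T := hET.symm
    _ ≤ Real.exp (t * r) * (M * Real.exp ((M * K) * T)) :=
        mul_le_mul_of_nonneg_left huT (Real.exp_nonneg _)
    _ = M * Real.exp (t * (ℓ - ε - M * K)) := by
        rw [show Real.exp (t * r) * (M * Real.exp ((M * K) * T))
            = M * (Real.exp (t * r) * Real.exp ((M * K) * T)) by ring,
          ← Real.exp_add, hT, hr]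
        congr 1
        ring
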